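/- arXiv:1508.05597 — 2 statements merged into one kernel-verified Lean document; each statement's English description precedes it below -/
import Mathlib

section
/- Suppose 1 < p < q, q > 2, and let α₁, β₁, γ > 0. Define for (X, Y, Z) with X > 0: F(X,Y,Z) = -(q-4)X^(q-2)Z - (q-2)X^q Z - 8α₁X^p YZ + 8α₁γX^q YZ + 2M YZ - 4Mα₁X^(p-2)Z + (4Mα₁γ - q + 4)X^(q-2)Z - 4α₁X^p Z + 4α₁γX^q Z - 8(β₁X^p + β₁γX^q)Y² - 4M(β₁X^p + β₁γX^q)Z² - 4(β₁X^p + β₁γX^q)Y + 4X⁻²Z, and H(X,Y,Z) = X^(q-4) + X^(q-2) + Y² + MZ² + Y + X⁻⁴ + M. Then there exist constants M > 0 and M₁ > 0 such that F(X,Y,Z) ≤ M₁ H(X,Y,Z) for all X > 0, Z ∈ ℝ, and Y ≥ X²Z². -/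
set_option maxHeartbeats 2000000 in
theorem core_10 (α₁ β₁ γ q : ℝ) (hα : 0 < α₁) (hβ : 0 < β₁) (hγ : 0 < γ) (hq : 2 < q) :
    ∃ M₁ > (0:ℝ), ∀ a b w Y Z : ℝ, 0 < a → 0 < b → 0 < w → a ≤ b + 1 → Z^2 ≤ Y*w →
      -(q-4)*(b*w)*Z - (q-2)*b*Z - 8*α₁*a*Y*Z + 8*α₁*γ*b*Y*Z + 2*Y*Z
        - 4*α₁*(a*w)*Z + (4*α₁*γ - q + 4)*(b*w)*Z - 4*α₁*a*Z + 4*α₁*γ*b*Z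
        - 8*(β₁*a + β₁*γ*b)*Y^2 - 4*(β₁*a + β₁*γ*b)*Z^2 - 4*(β₁*a + β₁*γ*b)*Y + 4*w*Z
      ≤ M₁ * (b*w^2 + b*w + Y^2 + Z^2 + Y + w^2 + 1) := by
  have hαγ : 0 < α₁*γ := mul_pos hα hγ
  have h1γ : 0 < 1 + γ := by linarith
  set C : ℝ := 2*q + 8 + 8*α₁ + 8*α₁*γ with hCdef
  have hC : 0 < C := by rw [hCdef]; linarith only [hq, hα, hαγ]
  set e : ℝ := β₁*γ/(C*(1+γ)) with hedef
  have he : 0 < e := by rw [hedef]; exact div_pos (mul_pos hβ hγ) (mul_pos hC h1γ)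
  set c1 : ℝ := C*e/2 with hc1def
  set c2 : ℝ := C/(2*e) with hc2def
  have hc1 : 0 < c1 := by rw [hc1def]; exact div_pos (mul_pos hC he) (by norm_num)
  have hc2 : 0 < c2 := by rw [hc2def]; exact div_pos hC (by linarith only [he])
  set l : ℝ := β₁*γ/((1+γ)*(1+2*c1+c2)) with hldef
  have hl : 0 < l := by
    rw [hldef]
    exact div_pos (mul_pos hβ hγ) (mul_pos h1γ (by linarith only [hc1, hc2]))
  set r : ℝ := 1/(2*l) with hrdef
  have hr : 0 < r := by rw [hrdef]; exact div_pos one_pos (by linarith only [hl])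
  have F1 : 2*c1*(1+γ) = β₁*γ := by
    rw [hc1def, hedef]; field_simp
  have F2 : l*((1+γ)*(1+2*c1+c2)) = β₁*γ := by
    rw [hldef]; field_simp
  clear_value C e c1 c2 l r
  have hcc : (0:ℝ) ≤ 2*c1+c2 := by linarith only [hc1, hc2]
  have hc12 : (0:ℝ) ≤ c1 + c2 := by linarith only [hc1, hc2]
  have G1 : 2*c1 ≤ β₁*γ := by linarith only [F1, mul_pos hc1 hγ]
  have G2 : 2*c1 ≤ β₁ := by nlinarith only [F1, hγ, hc1]
  have G3' : (2*c1+c2)*l*(1+γ) ≤ β₁*γ := by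
    linarith only [F2, mul_pos hl h1γ]
  have G3b : (2*c1+c2)*l ≤ β₁*γ := by
    linarith only [G3', mul_nonneg (mul_nonneg hcc hl.le) hγ.le]
  have G3c : (2*c1+c2)*l ≤ β₁ := by
    nlinarith only [G3', hγ, mul_nonneg (mul_nonneg hcc hl.le) hγ.le,
      mul_nonneg hcc hl.le]
  have G4c : (c1+c2)*l ≤ β₁ := by linarith only [G3c, mul_pos hc1 hl]
  set M1 : ℝ := 1 + 10*(c1+c2) + 4*r*(c1+c2) with hM1def
  clear_value M1
  have hM1 : 0 < M1 := by
    rw [hM1def]; linarith only [mul_nonneg hr.le hc12, hc1, hc2]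
  refine ⟨M1, hM1, ?_⟩
  intro a b w Y Z ha hb hw hab hzy
  have hY : (0:ℝ) ≤ Y := by nlinarith only [sq_nonneg Z, hzy, hw]
  have hbw : (0:ℝ) ≤ b*w := mul_nonneg hb.le hw.le
  have haY : (0:ℝ) ≤ a*Y := mul_nonneg ha.le hY
  have hbY : (0:ℝ) ≤ b*Y := mul_nonneg hb.le hY
  have haw : (0:ℝ) ≤ a*w := mul_nonneg ha.le hw.le
  have hba : (0:ℝ) ≤ b + 1 - a := by linarith only [hab]
  have k1 : (0:ℝ) ≤ 2*C + 2*q - 8 - 4*(α₁*γ) := by rw [hCdef]; linarith only [hq, hα, hαγ]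
  have k2 : (0:ℝ) ≤ 2*C + q - 2 - 4*(α₁*γ) := by rw [hCdef]; linarith only [hq, hα, hαγ]
  have k3 : (0:ℝ) ≤ C + 8*α₁ := by rw [hCdef]; linarith only [hq, hα, hαγ]
  have k4 : (0:ℝ) ≤ C - 8*(α₁*γ) := by rw [hCdef]; linarith only [hq, hα, hαγ]
  have k5 : (0:ℝ) ≤ C - 2 := by rw [hCdef]; linarith only [hq, hα, hαγ]
  have k6 : (0:ℝ) ≤ C + 4*α₁ := by rw [hCdef]; linarith only [hq, hα, hαγ]
  have k7 : (0:ℝ) ≤ C - 4 := by rw [hCdef]; linarith only [hq, hα, hαγ]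
  have n1 : (0:ℝ) ≤ 2*C - 2*q + 8 + 4*(α₁*γ) := by rw [hCdef]; linarith only [hq, hα, hαγ]
  have n2 : (0:ℝ) ≤ 2*C - q + 2 + 4*(α₁*γ) := by rw [hCdef]; linarith only [hq, hα, hαγ]
  have n3 : (0:ℝ) ≤ C - 8*α₁ := by rw [hCdef]; linarith only [hq, hα, hαγ]
  have n4 : (0:ℝ) ≤ C + 8*(α₁*γ) := by rw [hCdef]; linarith only [hq, hα, hαγ]
  have n5 : (0:ℝ) ≤ C + 2 := by rw [hCdef]; linarith only [hq, hα, hαγ]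
  have n6 : (0:ℝ) ≤ C - 4*α₁ := by rw [hCdef]; linarith only [hq, hα, hαγ]
  have n7 : (0:ℝ) ≤ C + 4 := by rw [hCdef]; linarith only [hq, hα, hαγ]
  have hG1 : (-(q-4)*(b*w) - (q-2)*b - 8*α₁*a*Y + 8*α₁*γ*b*Y + 2*Y - 4*α₁*(a*w)
      + (4*α₁*γ - q + 4)*(b*w) - 4*α₁*a + 4*α₁*γ*b + 4*w)
      ≤ C*(2*(b*w) + 2*b + a*Y + b*Y + Y + a*w + a + w) := by
    linarith only [mul_nonneg k1 hbw, mul_nonneg k2 hb.le, mul_nonneg k3 haY,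
      mul_nonneg k4 hbY, mul_nonneg k5 hY, mul_nonneg k6 haw,
      mul_nonneg k6 ha.le, mul_nonneg k7 hw.le]
  have hG2 : -(-(q-4)*(b*w) - (q-2)*b - 8*α₁*a*Y + 8*α₁*γ*b*Y + 2*Y - 4*α₁*(a*w)
      + (4*α₁*γ - q + 4)*(b*w) - 4*α₁*a + 4*α₁*γ*b + 4*w)
      ≤ C*(2*(b*w) + 2*b + a*Y + b*Y + Y + a*w + a + w) := by
    linarith only [mul_nonneg n1 hbw, mul_nonneg n2 hb.le, mul_nonneg n3 haY,
      mul_nonneg n4 hbY, mul_nonneg n5 hY, mul_nonneg n6 haw,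
      mul_nonneg n6 ha.le, mul_nonneg n7 hw.le]
  have h2e : (0:ℝ) < 2*e := by linarith only [he]
  have hZle : Z*(2*e) ≤ e^2*Y + w := by
    have hmul := mul_le_mul_of_nonneg_left hzy (sq_nonneg e)
    nlinarith only [sq_nonneg (e*Z - w), hmul, hw, he]
  have hZle' : (-Z)*(2*e) ≤ e^2*Y + w := by
    have hmul := mul_le_mul_of_nonneg_left hzy (sq_nonneg e)
    nlinarith only [sq_nonneg (e*Z + w), hmul, hw, he]
  have hTnn : (0:ℝ) ≤ 2*(b*w) + 2*b + a*Y + b*Y + Y + a*w + a + w := by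
    linarith only [hbw, haY, hbY, haw, hY, ha.le, hb.le, hw.le]
  have hCT : (0:ℝ) ≤ C*(2*(b*w) + 2*b + a*Y + b*Y + Y + a*w + a + w) :=
    mul_nonneg hC.le hTnn
  have heq : (C*(2*(b*w) + 2*b + a*Y + b*Y + Y + a*w + a + w))*((e^2*Y + w)/(2*e))
      = c1*((2*(b*w) + 2*b + a*Y + b*Y + Y + a*w + a + w)*Y)
        + c2*((2*(b*w) + 2*b + a*Y + b*Y + Y + a*w + a + w)*w) := by
    rw [hc1def, hc2def]; field_simp
  have key : (-(q-4)*(b*w) - (q-2)*b - 8*α₁*a*Y + 8*α₁*γ*b*Y + 2*Y - 4*α₁*(a*w)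
      + (4*α₁*γ - q + 4)*(b*w) - 4*α₁*a + 4*α₁*γ*b + 4*w)*Z
      ≤ c1*((2*(b*w) + 2*b + a*Y + b*Y + Y + a*w + a + w)*Y)
        + c2*((2*(b*w) + 2*b + a*Y + b*Y + Y + a*w + a + w)*w) := by
    rcases le_total 0 Z with hZ0 | hZ0
    · have s1 := mul_le_mul_of_nonneg_right hG1 hZ0
      have s2 := mul_le_mul_of_nonneg_left ((le_div_iff₀ h2e).mpr hZle) hCT
      linarith only [heq, s1, s2]
    · have s1 := mul_le_mul hG2 ((le_div_iff₀ h2e).mpr hZle')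
        (by linarith only [hZ0] : (0:ℝ) ≤ -Z) hCT
      linarith only [s1, heq]
  have hWY : w*Y ≤ l/2*Y^2 + r*w^2 := by
    rw [hrdef]
    have h0 : l/2*Y^2 + 1/(2*l)*w^2 - w*Y = (l*Y - w)^2/(2*l) := by
      field_simp [hl.ne']; ring
    have h1 : (0:ℝ) ≤ (l*Y - w)^2/(2*l) :=
      div_nonneg (sq_nonneg _) (by linarith only [hl])
    linarith only [h0, h1]
  have hP3c : (0:ℝ) ≤ c2 + (c1+c2)*r := by
    linarith only [hc2, mul_nonneg hc12 hr.le]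
  have P1 : (2*c1+c2)*(b*(w*Y)) ≤ (2*c1+c2)*(b*(l/2*Y^2 + r*w^2)) :=
    mul_le_mul_of_nonneg_left (mul_le_mul_of_nonneg_left hWY hb.le) hcc
  have P2 : (c1+c2)*(a*(w*Y)) ≤ (c1+c2)*(a*(l/2*Y^2 + r*w^2)) :=
    mul_le_mul_of_nonneg_left (mul_le_mul_of_nonneg_left hWY ha.le) hc12
  have P3 : (c2 + (c1+c2)*r)*(a*w^2) ≤ (c2 + (c1+c2)*r)*(b*w^2 + w^2) :=
    mul_le_mul_of_nonneg_left
      (by linarith only [mul_nonneg hba (sq_nonneg w)]) hP3c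
  have P4 : c2*(a*w) ≤ c2*(b*w + 1 + w^2) :=
    mul_le_mul_of_nonneg_left
      (by linarith only [mul_nonneg hba hw.le, sq_nonneg (w-1), sq_nonneg w]) hc2.le
  have P5 : (c1+c2)*(w*Y) ≤ (c1+c2)*(w^2/2 + Y^2/2) :=
    mul_le_mul_of_nonneg_left (by linarith only [sq_nonneg (w-Y)]) hc12
  have P6 : c1*(a*Y) ≤ c1*(b*Y + Y) :=
    mul_le_mul_of_nonneg_left (by linarith only [mul_nonneg hba hY]) hc1.le
  have hβγ : (0:ℝ) < β₁*γ := mul_pos hβ hγ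
  have sc1 : (0:ℝ) ≤ 8*β₁*γ - c1 - (2*c1+c2)*(l/2) := by
    linarith only [G1, G3b, hβγ]
  have sc2 : (0:ℝ) ≤ 8*β₁ - c1 - (c1+c2)*(l/2) := by
    linarith only [G2, G4c, hβ]
  have sc3 : (0:ℝ) ≤ 4*β₁*γ - 3*c1 := by linarith only [G1, hβγ]
  have sc5 : (0:ℝ) ≤ M1 - 3*c2 - (3*c1+2*c2)*r := by
    rw [hM1def]
    linarith only [mul_nonneg hr.le hc1.le, mul_nonneg hr.le hc2.le, hc1, hc2]
  have sc6 : (0:ℝ) ≤ M1 - 3*c2 := by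
    rw [hM1def]; linarith only [mul_nonneg hr.le hc12, hc1, hc2]
  have sc7 : (0:ℝ) ≤ M1 - 3*c2 - (c1+c2)*r - (c1+c2)/2 := by
    rw [hM1def]
    linarith only [mul_nonneg hr.le hc1.le, mul_nonneg hr.le hc2.le, hc1, hc2]
  have sc8 : (0:ℝ) ≤ M1 - c1 - (c1+c2)/2 := by
    rw [hM1def]; linarith only [mul_nonneg hr.le hc12, hc1, hc2]
  have sc9 : (0:ℝ) ≤ M1 - c1 := by
    rw [hM1def]; linarith only [mul_nonneg hr.le hc12, hc1, hc2]
  have sc11 : (0:ℝ) ≤ M1 - c2 := by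
    rw [hM1def]; linarith only [mul_nonneg hr.le hc12, hc1, hc2]
  have S1 := mul_nonneg sc1 (mul_nonneg hb.le (sq_nonneg Y))
  have S2 := mul_nonneg sc2 (mul_nonneg ha.le (sq_nonneg Y))
  have S3 := mul_nonneg sc3 hbY
  have S4 : (0:ℝ) ≤ 4*β₁*(a*Y) := mul_nonneg (by linarith only [hβ]) haY
  have S5 := mul_nonneg sc5 (mul_nonneg hb.le (sq_nonneg w))
  have S6 := mul_nonneg sc6 hbw
  have S7 := mul_nonneg sc7 (sq_nonneg w)
  have S8 := mul_nonneg sc8 (sq_nonneg Y)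
  have S9 := mul_nonneg sc9 hY
  have S10 : (0:ℝ) ≤ M1*Z^2 := mul_nonneg hM1.le (sq_nonneg Z)
  have hassem : c1*((2*(b*w) + 2*b + a*Y + b*Y + Y + a*w + a + w)*Y)
        + c2*((2*(b*w) + 2*b + a*Y + b*Y + Y + a*w + a + w)*w)
      ≤ 8*β₁*a*Y^2 + 8*β₁*γ*b*Y^2 + 4*β₁*a*Y + 4*β₁*γ*b*Y
        + M1*(b*w^2 + b*w + Y^2 + Z^2 + Y + w^2 + 1) := by
    linarith only [P1, P2, P3, P4, P5, P6, S1, S2, S3, S4, S5, S6, S7, S8, S9, S10, sc11]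
  linarith only [key, hassem, mul_nonneg (mul_nonneg hβ.le ha.le) (sq_nonneg Z),
    mul_nonneg (mul_nonneg (mul_nonneg hβ.le hγ.le) hb.le) (sq_nonneg Z)]

theorem stmt_10 (α₁ β₁ γ p q : ℝ) (hα : 0 < α₁) (hβ : 0 < β₁) (hγ : 0 < γ)
    (hp : 1 < p) (hpq : p < q) (hq : 2 < q) :
    ∃ M > (0 : ℝ), ∃ M₁ > (0 : ℝ), ∀ X Y Z : ℝ, 0 < X → Y ≥ X ^ 2 * Z ^ 2 →
      -(q - 4) * X ^ (q - 2) * Z - (q - 2) * X ^ q * Z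
        - 8 * α₁ * X ^ p * Y * Z + 8 * α₁ * γ * X ^ q * Y * Z + 2 * M * Y * Z
        - 4 * M * α₁ * X ^ (p - 2) * Z + (4 * M * α₁ * γ - q + 4) * X ^ (q - 2) * Z
        - 4 * α₁ * X ^ p * Z + 4 * α₁ * γ * X ^ q * Z
        - 8 * (β₁ * X ^ p + β₁ * γ * X ^ q) * Y ^ 2
        - 4 * M * (β₁ * X ^ p + β₁ * γ * X ^ q) * Z ^ 2
        - 4 * (β₁ * X ^ p + β₁ * γ * X ^ q) * Y + 4 * X ^ (-2 : ℝ) * Z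
      ≤ M₁ * (X ^ (q - 4) + X ^ (q - 2) + Y ^ 2 + M * Z ^ 2 + Y + X ^ (-4 : ℝ) + M) := by
  obtain ⟨M₁, hM₁, hcore⟩ := core_10 α₁ β₁ γ q hα hβ hγ hq
  refine ⟨1, one_pos, M₁, hM₁, ?_⟩
  intro X Y Z hX hYZ
  have hP : 0 < X ^ p := Real.rpow_pos_of_pos hX p
  have hQ : 0 < X ^ q := Real.rpow_pos_of_pos hX q
  have hw : 0 < X ^ (-2:ℝ) := Real.rpow_pos_of_pos hX _
  have hab : X ^ p ≤ X ^ q + 1 := by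
    rcases le_total X 1 with h | h
    · have h1 : X ^ p ≤ 1 := Real.rpow_le_one hX.le h (by linarith)
      linarith [hQ]
    · have h1 : X ^ p ≤ X ^ q := Real.rpow_le_rpow_of_exponent_le h hpq.le
      linarith
  have hcancel : X ^ (-2:ℝ) * X ^ 2 = 1 := by
    rw [← Real.rpow_natCast X 2, ← Real.rpow_add hX]
    norm_num
  have hzw : Z ^ 2 ≤ Y * X ^ (-2:ℝ) := by
    have h1 : X ^ (-2:ℝ) * (X ^ 2 * Z ^ 2) ≤ X ^ (-2:ℝ) * Y :=
      mul_le_mul_of_nonneg_left hYZ hw.le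
    have h2 : X ^ (-2:ℝ) * X ^ 2 * Z ^ 2 = Z ^ 2 := by rw [hcancel, one_mul]
    nlinarith [h1, h2]
  have e1 : X ^ (q - 2) = X ^ q * X ^ (-2:ℝ) := by
    rw [show q - 2 = q + (-2) by ring, Real.rpow_add hX]
  have e2 : X ^ (q - 4) = X ^ q * X ^ (-2:ℝ) * X ^ (-2:ℝ) := by
    rw [show q - 4 = q + (-2) + (-2) by ring, Real.rpow_add hX, Real.rpow_add hX]
  have e3 : X ^ (p - 2) = X ^ p * X ^ (-2:ℝ) := by
    rw [show p - 2 = p + (-2) by ring, Real.rpow_add hX]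
  have e4 : X ^ (-4:ℝ) = X ^ (-2:ℝ) * X ^ (-2:ℝ) := by
    rw [show (-4:ℝ) = -2 + -2 by norm_num, Real.rpow_add hX]
  rw [e1, e2, e3, e4]
  linarith only [hcore (X ^ p) (X ^ q) (X ^ (-2:ℝ)) Y Z hP hQ hw hab hzw]
end

section
/- Suppose 1 < p < q, q > 2, d > max{q-4, 2}, σ > 0, α₁, β₁, γ > 0, and θ satisfies max{q-6, 0} < θ < min{d-2, q-2}. Define f(X,Y,Z) = -θX^(θ+2)Z - 4α₁MX^(p-2)Z + 2α₁γMX^(q-2)Z - 8α₁X^p YZ + 8α₁γX^q YZ + 2MYZ + Mσ²Y + 4X⁻²Z + 2(d+2)σ²X⁻² - ((d-2-θ)θσ²/2)X^(θ+2) - 8(β₁X^p + β₁γX^q)Y² - 4M(β₁X^p + β₁γX^q)Z², and V(X,Y,Z) = X^θ + X⁻⁴ + Y² + MZ² + M. Then there exist M > 0 and M₂ > 0 such that f(X,Y,Z) ≤ M₂ V(X,Y,Z) for all X > 0, Z ∈ ℝ, and Y ≥ X²Z². -/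
lemma aux_pow_between (X a s b : ℝ) (hX : 0 < X) (h1 : a ≤ s) (h2 : s ≤ b) :
    X ^ s ≤ X ^ a + X ^ b := by
  rcases le_total X 1 with h | h
  · have h3 : X ^ s ≤ X ^ a := Real.rpow_le_rpow_of_exponent_ge hX h h1
    have h4 : 0 ≤ X ^ b := (Real.rpow_pos_of_pos hX b).le
    linarith
  · have h3 : X ^ s ≤ X ^ b := Real.rpow_le_rpow_of_exponent_le h h2
    have h4 : 0 ≤ X ^ a := (Real.rpow_pos_of_pos hX a).le
    linarith

lemma aux_tail (s t ε : ℝ) (hs : -4 ≤ s) (hst : s < t) (hε : 0 < ε) :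
    ∃ C > 0, ∀ X : ℝ, 0 < X → X ^ s ≤ ε * X ^ t + X ^ (-4 : ℝ) + C := by
  set E := ε ^ (-(t - s)⁻¹) with hE
  have hEpos : 0 < E := Real.rpow_pos_of_pos hε _
  set R := max 1 E with hR
  have hR1 : (1:ℝ) ≤ R := le_max_left _ _
  have hRpos : 0 < R := lt_of_lt_of_le one_pos hR1
  refine ⟨max 1 (R ^ s), lt_of_lt_of_le one_pos (le_max_left _ _), ?_⟩
  intro X hX
  have hXt : 0 ≤ ε * X ^ t := (mul_pos hε (Real.rpow_pos_of_pos hX t)).le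
  have hX4 : 0 ≤ X ^ (-4 : ℝ) := (Real.rpow_pos_of_pos hX _).le
  have hC1 : (1:ℝ) ≤ max 1 (R ^ s) := le_max_left _ _
  rcases le_total X 1 with h1 | h1
  · have h5 : X ^ s ≤ X ^ (-4 : ℝ) := Real.rpow_le_rpow_of_exponent_ge hX h1 hs
    linarith
  · rcases le_total X R with h2 | h2
    · rcases le_total s 0 with hs0 | hs0
      · have h5 : X ^ s ≤ 1 := Real.rpow_le_one_of_one_le_of_nonpos h1 hs0
        linarith
      · have h5 : X ^ s ≤ R ^ s := Real.rpow_le_rpow (by linarith) h2 hs0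
        have h6 : R ^ s ≤ max 1 (R ^ s) := le_max_right _ _
        linarith
    · have hstep : X ^ (s - t) ≤ ε := by
        have hE2 : E ≤ X := le_trans (le_max_right 1 E) h2
        have h5 : X ^ (s - t) ≤ E ^ (s - t) :=
          Real.rpow_le_rpow_of_nonpos hEpos hE2 (by linarith)
        have h7 : (-(t - s)⁻¹) * (s - t) = 1 := by
          have : t - s ≠ 0 := by linarith
          field_simp
          ring
        have h6 : E ^ (s - t) = ε := by
          rw [hE, ← Real.rpow_mul hε.le, h7, Real.rpow_one]
        linarith
      have hXs : X ^ s = X ^ t * X ^ (s - t) := by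
        rw [← Real.rpow_add hX]; congr 1; ring
      have h7 : X ^ t * X ^ (s - t) ≤ X ^ t * ε :=
        mul_le_mul_of_nonneg_left hstep (Real.rpow_nonneg hX.le t)
      have hCnn : (0:ℝ) ≤ max 1 (R ^ s) := by linarith
      nlinarith [hXs, h7]

set_option maxHeartbeats 1000000 in
theorem stmt_14 (α₁ β₁ γ σ p q d θ : ℝ) (hα : 0 < α₁) (hβ : 0 < β₁) (hγ : 0 < γ)
    (hσ : 0 < σ) (hp : 1 < p) (hpq : p < q) (hq : 2 < q) (hd : d > max (q - 4) 2)
    (hθ₁ : max (q - 6) 0 < θ) (hθ₂ : θ < min (d - 2) (q - 2)) :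
    ∃ M > (0 : ℝ), ∃ M₂ > (0 : ℝ), ∀ X Y Z : ℝ, 0 < X → Y ≥ X ^ 2 * Z ^ 2 →
      -θ * X ^ (θ + 2) * Z - 4 * α₁ * M * X ^ (p - 2) * Z + 2 * α₁ * γ * M * X ^ (q - 2) * Z
        - 8 * α₁ * X ^ p * Y * Z + 8 * α₁ * γ * X ^ q * Y * Z + 2 * M * Y * Z
        + M * σ ^ 2 * Y + 4 * X ^ (-2 : ℝ) * Z + 2 * (d + 2) * σ ^ 2 * X ^ (-2 : ℝ)
        - (d - 2 - θ) * θ * σ ^ 2 / 2 * X ^ (θ + 2)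
        - 8 * (β₁ * X ^ p + β₁ * γ * X ^ q) * Y ^ 2
        - 4 * M * (β₁ * X ^ p + β₁ * γ * X ^ q) * Z ^ 2
      ≤ M₂ * (X ^ θ + X ^ (-4 : ℝ) + Y ^ 2 + M * Z ^ 2 + M) := by
  have hq6 : q - 6 < θ := lt_of_le_of_lt (le_max_left _ _) hθ₁
  have hθ0 : 0 < θ := lt_of_le_of_lt (le_max_right _ _) hθ₁
  have hθd : θ < d - 2 := lt_of_lt_of_le hθ₂ (min_le_left _ _)
  have hθq : θ < q - 2 := lt_of_lt_of_le hθ₂ (min_le_right _ _)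
  have hd2 : 2 < d := lt_of_le_of_lt (le_max_right _ _) hd
  have hσ2 : 0 < σ ^ 2 := by positivity
  obtain ⟨c₀, hc₀def⟩ : ∃ c₀ : ℝ, c₀ = (d - 2 - θ) * θ * σ ^ 2 / 2 := ⟨_, rfl⟩
  have hc₀ : 0 < c₀ := by
    rw [hc₀def]
    have h1 : 0 < d - 2 - θ := by linarith
    nlinarith [mul_pos (mul_pos h1 hθ0) hσ2]
  have hc₀ne : c₀ ≠ 0 := hc₀.ne'
  obtain ⟨M, hMdef⟩ : ∃ M : ℝ, M = 1 + θ ^ 2 / (c₀ * β₁ * γ) + 2 * α₁ ^ 2 / β₁ ^ 2 := ⟨_, rfl⟩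
  have hnn1 : 0 ≤ θ ^ 2 / (c₀ * β₁ * γ) :=
    div_nonneg (sq_nonneg θ) (by positivity)
  have hnn2 : 0 ≤ 2 * α₁ ^ 2 / β₁ ^ 2 := by positivity
  have hM1 : (1:ℝ) ≤ M := by rw [hMdef]; linarith
  have hM : 0 < M := by linarith
  have hMa : θ ^ 2 / c₀ ≤ M * (β₁ * γ) := by
    have h1 : θ ^ 2 / (c₀ * β₁ * γ) ≤ M := by rw [hMdef]; linarith
    have h2 := mul_le_mul_of_nonneg_right h1 (mul_pos hβ hγ).le
    have h3 : θ ^ 2 / (c₀ * β₁ * γ) * (β₁ * γ) = θ ^ 2 / c₀ := by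
      field_simp
    linarith
  have hMb : 2 * α₁ ^ 2 / β₁ ≤ M * β₁ := by
    have h1 : 2 * α₁ ^ 2 / β₁ ^ 2 ≤ M := by rw [hMdef]; linarith
    have h2 := mul_le_mul_of_nonneg_right h1 hβ.le
    have h3 : 2 * α₁ ^ 2 / β₁ ^ 2 * β₁ = 2 * α₁ ^ 2 / β₁ := by
      field_simp
    linarith
  have hMc : 2 * α₁ ^ 2 * γ / β₁ ≤ M * (β₁ * γ) := by
    have h2 := mul_le_mul_of_nonneg_right hMb hγ.le
    have h3 : 2 * α₁ ^ 2 / β₁ * γ = 2 * α₁ ^ 2 * γ / β₁ := by ring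
    linarith
  obtain ⟨A2, hA2def⟩ : ∃ A2 : ℝ, A2 = 4 * α₁ ^ 2 * M / β₁ := ⟨_, rfl⟩
  obtain ⟨A3, hA3def⟩ : ∃ A3 : ℝ, A3 = α₁ ^ 2 * γ * M / β₁ := ⟨_, rfl⟩
  have hA2 : 0 < A2 := by
    rw [hA2def]
    exact div_pos (mul_pos (by positivity) hM) hβ
  have hA3 : 0 < A3 := by
    rw [hA3def]
    exact div_pos (mul_pos (mul_pos (pow_pos hα 2) hγ) hM) hβ
  obtain ⟨C₂, hC₂pos, hC₂⟩ := aux_tail (p - 4) (θ + 2) (c₀ / (8 * A2))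
    (by linarith) (by linarith) (div_pos hc₀ (by linarith))
  obtain ⟨C₃, hC₃pos, hC₃⟩ := aux_tail (q - 4) (θ + 2) (c₀ / (8 * A3))
    (by linarith) (by linarith) (div_pos hc₀ (by linarith))
  have hθ2c : 0 ≤ θ ^ 2 / c₀ := div_nonneg (sq_nonneg θ) hc₀.le
  have hd2σ : 0 < (d + 2) * σ ^ 2 := mul_pos (by linarith) hσ2
  have hA2C : 0 < A2 * C₂ := mul_pos hA2 hC₂pos
  have hA3C : 0 < A3 * C₃ := mul_pos hA3 hC₃pos
  have hMσ : 0 ≤ M * σ ^ 2 / 2 := by positivity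
  obtain ⟨M₂, hM₂def⟩ : ∃ M₂ : ℝ, M₂ = A2 + A3 + 2 + (d + 2) * σ ^ 2 + (θ ^ 2 / c₀ + M + 2)
      + (M + M * σ ^ 2 / 2) + (A2 * C₂ + A3 * C₃ + M * σ ^ 2 / 2 + (d + 2) * σ ^ 2) := ⟨_, rfl⟩
  have hM₂ : 0 < M₂ := by rw [hM₂def]; linarith
  refine ⟨M, hM, M₂, hM₂, ?_⟩
  intro X Y Z hX hY
  have hgoalc : (d - 2 - θ) * θ * σ ^ 2 / 2 * X ^ (θ + 2) = c₀ * X ^ (θ + 2) := by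
    rw [hc₀def]
  have hth : X ^ ((θ + 2) / 2) * X ^ ((θ + 2) / 2) = X ^ (θ + 2) := by
    rw [← Real.rpow_add hX]; congr 1; ring
  have hpp : X ^ (p / 2) * X ^ (p / 2) = X ^ p := by
    rw [← Real.rpow_add hX]; congr 1; ring
  have hpv : X ^ (p / 2) * X ^ ((p - 4) / 2) = X ^ (p - 2) := by
    rw [← Real.rpow_add hX]; congr 1; ring
  have hpvv : X ^ ((p - 4) / 2) * X ^ ((p - 4) / 2) = X ^ (p - 4) := by
    rw [← Real.rpow_add hX]; congr 1; ring
  have hqq : X ^ (q / 2) * X ^ (q / 2) = X ^ q := by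
    rw [← Real.rpow_add hX]; congr 1; ring
  have hqv : X ^ (q / 2) * X ^ ((q - 4) / 2) = X ^ (q - 2) := by
    rw [← Real.rpow_add hX]; congr 1; ring
  have hqvv : X ^ ((q - 4) / 2) * X ^ ((q - 4) / 2) = X ^ (q - 4) := by
    rw [← Real.rpow_add hX]; congr 1; ring
  have hww : X ^ (-2 : ℝ) * X ^ (-2 : ℝ) = X ^ (-4 : ℝ) := by
    rw [← Real.rpow_add hX]; norm_num
  have hXθ2 : 0 ≤ X ^ (θ + 2) := (Real.rpow_pos_of_pos hX _).le
  have hXθ : 0 ≤ X ^ θ := (Real.rpow_pos_of_pos hX _).le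
  have hXp : 0 ≤ X ^ p := (Real.rpow_pos_of_pos hX _).le
  have hXq : 0 ≤ X ^ q := (Real.rpow_pos_of_pos hX _).le
  have hX4 : 0 ≤ X ^ (-4 : ℝ) := (Real.rpow_pos_of_pos hX _).le
  -- b1
  have hb1a : X ^ (θ + 2) ≤ 1 + X ^ q := by
    have h := aux_pow_between X 0 (θ + 2) q hX (by linarith) (by linarith)
    rwa [Real.rpow_zero] at h
  have hb1b : θ ^ 2 / c₀ * (X ^ (θ + 2) * Z ^ 2) ≤ θ ^ 2 / c₀ * ((1 + X ^ q) * Z ^ 2) :=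
    mul_le_mul_of_nonneg_left (mul_le_mul_of_nonneg_right hb1a (sq_nonneg Z)) hθ2c
  have hb1 : -θ * X ^ (θ + 2) * Z ≤ c₀ / 4 * X ^ (θ + 2) + θ ^ 2 / c₀ * (X ^ (θ + 2) * Z ^ 2) := by
    rw [← hth]
    set u := X ^ ((θ + 2) / 2) with hu
    have expand : c₀ / 4 * (u * u) + θ ^ 2 / c₀ * (u * u * Z ^ 2) - (-θ * (u * u) * Z)
        = (c₀ * u + 2 * θ * (u * Z)) ^ 2 / (4 * c₀) := by
      field_simp; ring
    have hpos : 0 ≤ (c₀ * u + 2 * θ * (u * Z)) ^ 2 / (4 * c₀) :=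
      div_nonneg (sq_nonneg _) (by linarith)
    linarith
  -- b2
  have hb2 : -(4 * α₁ * M) * (X ^ (p - 2) * Z) ≤ M * β₁ * (X ^ p * Z ^ 2) + A2 * X ^ (p - 4) := by
    rw [← hpv, ← hpp, ← hpvv, hA2def]
    set u := X ^ (p / 2) with hu
    set v := X ^ ((p - 4) / 2) with hv
    have expand : M * β₁ * (u * u * Z ^ 2) + 4 * α₁ ^ 2 * M / β₁ * (v * v)
        - (-(4 * α₁ * M) * (u * v * Z)) = M / β₁ * (β₁ * (u * Z) + 2 * α₁ * v) ^ 2 := by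
      field_simp; ring
    have hpos : 0 ≤ M / β₁ * (β₁ * (u * Z) + 2 * α₁ * v) ^ 2 :=
      mul_nonneg (div_nonneg hM.le hβ.le) (sq_nonneg _)
    linarith
  have hb2' : A2 * X ^ (p - 4) ≤ c₀ / 8 * X ^ (θ + 2) + A2 * X ^ (-4 : ℝ) + A2 * C₂ := by
    have h := mul_le_mul_of_nonneg_left (hC₂ X hX) hA2.le
    have heq : A2 * (c₀ / (8 * A2)) = c₀ / 8 := by
      field_simp
    calc A2 * X ^ (p - 4) ≤ A2 * (c₀ / (8 * A2) * X ^ (θ + 2) + X ^ (-4 : ℝ) + C₂) := h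
      _ = A2 * (c₀ / (8 * A2)) * X ^ (θ + 2) + A2 * X ^ (-4 : ℝ) + A2 * C₂ := by ring
      _ = c₀ / 8 * X ^ (θ + 2) + A2 * X ^ (-4 : ℝ) + A2 * C₂ := by rw [heq]
  -- b3
  have hb3 : (2 * α₁ * γ * M) * (X ^ (q - 2) * Z)
      ≤ M * β₁ * γ * (X ^ q * Z ^ 2) + A3 * X ^ (q - 4) := by
    rw [← hqv, ← hqq, ← hqvv, hA3def]
    set u := X ^ (q / 2) with hu
    set v := X ^ ((q - 4) / 2) with hv
    have expand : M * β₁ * γ * (u * u * Z ^ 2) + α₁ ^ 2 * γ * M / β₁ * (v * v)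
        - (2 * α₁ * γ * M) * (u * v * Z) = M * γ / β₁ * (β₁ * (u * Z) - α₁ * v) ^ 2 := by
      field_simp; ring
    have hpos : 0 ≤ M * γ / β₁ * (β₁ * (u * Z) - α₁ * v) ^ 2 :=
      mul_nonneg (div_nonneg (mul_nonneg hM.le hγ.le) hβ.le) (sq_nonneg _)
    linarith
  have hb3' : A3 * X ^ (q - 4) ≤ c₀ / 8 * X ^ (θ + 2) + A3 * X ^ (-4 : ℝ) + A3 * C₃ := by
    have h := mul_le_mul_of_nonneg_left (hC₃ X hX) hA3.le
    have heq : A3 * (c₀ / (8 * A3)) = c₀ / 8 := by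
      field_simp
    calc A3 * X ^ (q - 4) ≤ A3 * (c₀ / (8 * A3) * X ^ (θ + 2) + X ^ (-4 : ℝ) + C₃) := h
      _ = A3 * (c₀ / (8 * A3)) * X ^ (θ + 2) + A3 * X ^ (-4 : ℝ) + A3 * C₃ := by ring
      _ = c₀ / 8 * X ^ (θ + 2) + A3 * X ^ (-4 : ℝ) + A3 * C₃ := by rw [heq]
  -- b4
  have hb4 : -(8 * α₁) * (X ^ p * (Y * Z))
      ≤ 2 * α₁ ^ 2 / β₁ * (X ^ p * Z ^ 2) + 8 * β₁ * (X ^ p * Y ^ 2) := by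
    rw [← hpp]
    set u := X ^ (p / 2) with hu
    have expand : 2 * α₁ ^ 2 / β₁ * (u * u * Z ^ 2) + 8 * β₁ * (u * u * Y ^ 2)
        - (-(8 * α₁) * (u * u * (Y * Z))) = 2 / β₁ * (α₁ * (u * Z) + 2 * β₁ * (u * Y)) ^ 2 := by
      field_simp; ring
    have hpos : 0 ≤ 2 / β₁ * (α₁ * (u * Z) + 2 * β₁ * (u * Y)) ^ 2 :=
      mul_nonneg (div_nonneg (by norm_num) hβ.le) (sq_nonneg _)
    linarith
  -- b5
  have hb5 : (8 * α₁ * γ) * (X ^ q * (Y * Z))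
      ≤ 2 * α₁ ^ 2 * γ / β₁ * (X ^ q * Z ^ 2) + 8 * β₁ * γ * (X ^ q * Y ^ 2) := by
    rw [← hqq]
    set u := X ^ (q / 2) with hu
    have expand : 2 * α₁ ^ 2 * γ / β₁ * (u * u * Z ^ 2) + 8 * β₁ * γ * (u * u * Y ^ 2)
        - (8 * α₁ * γ) * (u * u * (Y * Z)) = 2 * γ / β₁ * (α₁ * (u * Z) - 2 * β₁ * (u * Y)) ^ 2 := by
      field_simp; ring
    have hpos : 0 ≤ 2 * γ / β₁ * (α₁ * (u * Z) - 2 * β₁ * (u * Y)) ^ 2 :=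
      mul_nonneg (div_nonneg (by linarith) hβ.le) (sq_nonneg _)
    linarith
  -- b6, b7, b8, b9
  have hb6 : 2 * M * (Y * Z) ≤ M * Y ^ 2 + M * Z ^ 2 := by
    linarith [mul_nonneg hM.le (sq_nonneg (Y - Z))]
  have hb7 : M * σ ^ 2 * Y ≤ M * σ ^ 2 / 2 + M * σ ^ 2 / 2 * Y ^ 2 := by
    linarith [mul_nonneg (mul_nonneg hM.le (sq_nonneg σ)) (sq_nonneg (Y - 1))]
  have hb8 : 4 * (X ^ (-2 : ℝ) * Z) ≤ 2 * X ^ (-4 : ℝ) + 2 * Z ^ 2 := by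
    rw [← hww]
    linarith [sq_nonneg (X ^ (-2 : ℝ) - Z)]
  have hb9 : 2 * (d + 2) * σ ^ 2 * X ^ (-2 : ℝ) ≤ (d + 2) * σ ^ 2 * X ^ (-4 : ℝ) + (d + 2) * σ ^ 2 := by
    rw [← hww]
    linarith [mul_nonneg (mul_nonneg (by linarith : (0:ℝ) ≤ d + 2) (sq_nonneg σ))
      (sq_nonneg (X ^ (-2 : ℝ) - 1))]
  -- slack facts
  have g1 : 0 ≤ c₀ / 2 * X ^ (θ + 2) := mul_nonneg (by linarith) hXθ2
  have g2 : 0 ≤ (3 * (M * β₁) - 2 * α₁ ^ 2 / β₁) * (X ^ p * Z ^ 2) :=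
    mul_nonneg (by linarith [hMb, (mul_pos hM hβ).le]) (mul_nonneg hXp (sq_nonneg Z))
  have g3 : 0 ≤ (3 * (M * (β₁ * γ)) - θ ^ 2 / c₀ - 2 * α₁ ^ 2 * γ / β₁) * (X ^ q * Z ^ 2) :=
    mul_nonneg (by linarith [hMa, hMc, (mul_pos hM (mul_pos hβ hγ)).le]) (mul_nonneg hXq (sq_nonneg Z))
  have g4 : 0 ≤ M₂ * X ^ θ := mul_nonneg hM₂.le hXθ
  have e4 : 0 ≤ (M₂ - (A2 + A3 + 2 + (d + 2) * σ ^ 2)) * X ^ (-4 : ℝ) := by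
    refine mul_nonneg ?_ hX4
    rw [hM₂def]; linarith
  have hMM : M₂ ≤ M₂ * M := by linarith [mul_nonneg hM₂.le (by linarith : (0:ℝ) ≤ M - 1)]
  have e5 : 0 ≤ (M₂ * M - (θ ^ 2 / c₀ + M + 2)) * Z ^ 2 := by
    refine mul_nonneg ?_ (sq_nonneg Z)
    have h1 : θ ^ 2 / c₀ + M + 2 ≤ M₂ := by rw [hM₂def]; linarith
    linarith
  have e6 : 0 ≤ (M₂ - (M + M * σ ^ 2 / 2)) * Y ^ 2 := by
    refine mul_nonneg ?_ (sq_nonneg Y)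
    rw [hM₂def]; linarith
  have e7 : 0 ≤ M₂ * M - (A2 * C₂ + A3 * C₃ + M * σ ^ 2 / 2 + (d + 2) * σ ^ 2) := by
    have h1 : A2 * C₂ + A3 * C₃ + M * σ ^ 2 / 2 + (d + 2) * σ ^ 2 ≤ M₂ := by
      rw [hM₂def]; linarith
    linarith
  linarith [hb1, hb1b, hb2, hb2', hb3, hb3', hb4, hb5, hb6, hb7, hb8, hb9,
    g1, g2, g3, g4, e4, e5, e6, e7, hgoalc]
end
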